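/- Let X ∈ B(E,F) be nonzero with generalized inverse X⁺, and let M(X) = { T ∈ B(E,F) : T N(X) ⊆ R(X) }. Then M(X) = { P_{R(X)} T + (I_F − P_{R(X)}) T P_{R(X⁺)} : T ∈ B(E,F) }, where P_{R(X)} = X X⁺ is the projection onto R(X) along N(X⁺) and P_{R(X⁺)} = X⁺ X is the projection onto R(X⁺) along N(X). -/

import Mathlib

theorem stmt_13 {E F : Type*} [NormedAddCommGroup E] [NormedSpace ℝ E] [CompleteSpace E]
    [NormedAddCommGroup F] [NormedSpace ℝ F] [CompleteSpace F]
    (X : E →L[ℝ] F) (Xp : F →L[ℝ] E) (hX : X ≠ 0)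
    (h1 : X ∘L Xp ∘L X = X) (h2 : Xp ∘L X ∘L Xp = Xp) :
    {T : E →L[ℝ] F | ∀ e ∈ LinearMap.ker (X : E →ₗ[ℝ] F), T e ∈ LinearMap.range (X : E →ₗ[ℝ] F)} =
      Set.range (fun T : E →L[ℝ] F =>
        (X ∘L Xp) ∘L T + ((1 : F →L[ℝ] F) - X ∘L Xp) ∘L T ∘L (Xp ∘L X)) := by
  have hfix : ∀ u : E, X (Xp (X u)) = X u := by
    intro u
    have := congrArg (fun f : E →L[ℝ] F => f u) h1
    simpa using this
  ext T
  simp only [Set.mem_setOf_eq, Set.mem_range]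
  constructor
  · intro hT
    refine ⟨T, ?_⟩
    ext e
    have hker : (e - Xp (X e)) ∈ LinearMap.ker (X : E →ₗ[ℝ] F) := by
      simp [LinearMap.mem_ker, map_sub, hfix]
    obtain ⟨u, hu⟩ := hT _ hker
    have hu' : X u = T e - T (Xp (X e)) := by simpa [map_sub] using hu
    simp only [ContinuousLinearMap.add_apply, ContinuousLinearMap.comp_apply,
      ContinuousLinearMap.sub_apply, ContinuousLinearMap.one_apply]
    have hTe : T e = X u + T (Xp (X e)) := by rw [hu']; abel
    rw [hTe]
    simp [map_add, hfix]
  · rintro ⟨S, rfl⟩ e he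
    have he0 : X e = 0 := he
    refine ⟨Xp (S e), ?_⟩
    simp [ContinuousLinearMap.add_apply, ContinuousLinearMap.comp_apply, he0]
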